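/- arXiv:1406.3332 — 3 statements merged into one kernel-verified Lean document; each statement's English description precedes it below -/
import Mathlib

section
/- Let H be a real inner product space and σ > 0. Then the Gaussian kernel on H is positive definite: for every n, every φ_1, …, φ_n ∈ H and every c_1, …, c_n ∈ ℝ, one has Σ_{i,j} c_i c_j exp(-‖φ_i - φ_j‖²/(2σ²)) ≥ 0. -/
open Real

open scoped RealInnerProductSpace in
/-- Powers of the real inner product kernel admit a finite Gram representation. -/
lemma inner_pow_gram_rep {H : Type*} [NormedAddCommGroup H] [InnerProductSpace ℝ H]
    (n : ℕ) (φ : Fin n → H) (k : ℕ) :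
    ∃ (T : Type) (_ : Fintype T) (g : Fin n → T → ℝ),
      ∀ i j, ⟪φ i, φ j⟫ ^ k = ∑ t, g i t * g j t := by
  -- first, a Gram representation of the inner product itself
  have base : ∃ (T : Type) (_ : Fintype T) (g : Fin n → T → ℝ),
      ∀ i j, ⟪φ i, φ j⟫ = ∑ t, g i t * g j t := by
    set K := Submodule.span ℝ (Set.range φ) with hK
    haveI : FiniteDimensional ℝ K :=
      FiniteDimensional.span_of_finite ℝ (Set.finite_range φ)
    let b := stdOrthonormalBasis ℝ K
    let ψ : Fin n → K := fun i => ⟨φ i, Submodule.subset_span (Set.mem_range_self i)⟩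
    refine ⟨Fin (Module.finrank ℝ K), inferInstance, fun i t => ⟪ψ i, b t⟫, fun i j => ?_⟩
    have h1 : ⟪ψ i, ψ j⟫ = ⟪φ i, φ j⟫ := rfl
    rw [← h1, ← b.sum_inner_mul_inner (ψ i) (ψ j)]
    refine Finset.sum_congr rfl fun t _ => ?_
    rw [real_inner_comm (ψ j) (b t)]
  induction k with
  | zero =>
    refine ⟨PUnit, inferInstance, fun _ _ => 1, fun i j => ?_⟩
    simp
  | succ k ih =>
    obtain ⟨T, _, g, hg⟩ := ih
    obtain ⟨S, _, f, hf⟩ := base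
    refine ⟨T × S, inferInstance, fun i p => g i p.1 * f i p.2, fun i j => ?_⟩
    rw [pow_succ, hg, hf, Finset.sum_mul_sum, ← Finset.sum_product']
    refine Finset.sum_congr rfl fun p _ => ?_
    ring

open scoped RealInnerProductSpace in
lemma inner_pow_quad_nonneg {H : Type*} [NormedAddCommGroup H] [InnerProductSpace ℝ H]
    (n : ℕ) (φ : Fin n → H) (a : Fin n → ℝ) (k : ℕ) :
    0 ≤ ∑ i, ∑ j, a i * a j * ⟪φ i, φ j⟫ ^ k := by
  obtain ⟨T, _, g, hg⟩ := inner_pow_gram_rep n φ k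
  have e1 : ∀ t : T, (∑ i, a i * g i t) ^ 2
      = ∑ i, ∑ j, a i * a j * (g i t * g j t) := by
    intro t
    rw [sq, Finset.sum_mul_sum]
    exact Finset.sum_congr rfl fun i _ => Finset.sum_congr rfl fun j _ => by ring
  have e2 : ∑ i, ∑ j, a i * a j * ⟪φ i, φ j⟫ ^ k
      = ∑ t : T, (∑ i, a i * g i t) ^ 2 :=
    calc ∑ i, ∑ j, a i * a j * ⟪φ i, φ j⟫ ^ k
        = ∑ i, ∑ j, ∑ t : T, a i * a j * (g i t * g j t) := by
          simp_rw [hg, Finset.mul_sum]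
      _ = ∑ i, ∑ t : T, ∑ j, a i * a j * (g i t * g j t) :=
          Finset.sum_congr rfl fun i _ => Finset.sum_comm
      _ = ∑ t : T, ∑ i, ∑ j, a i * a j * (g i t * g j t) := Finset.sum_comm
      _ = ∑ t : T, (∑ i, a i * g i t) ^ 2 :=
          Finset.sum_congr rfl fun t _ => (e1 t).symm
  rw [e2]
  exact Finset.sum_nonneg fun t _ => sq_nonneg _

lemma real_exp_eq_tsum (x : ℝ) : Real.exp x = ∑' m : ℕ, x ^ m / (m.factorial : ℝ) := by
  rw [Real.exp_eq_exp_ℝ, NormedSpace.exp_eq_tsum_div]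

/-- The Gaussian kernel on a real inner product space `H` is positive definite. -/
theorem gaussian_kernel_pos_def_inner_product_space
    {H : Type*} [NormedAddCommGroup H] [InnerProductSpace ℝ H]
    (σ : ℝ) (hσ : 0 < σ)
    (n : ℕ) (φ : Fin n → H) (c : Fin n → ℝ) :
    0 ≤ ∑ i, ∑ j, c i * c j * Real.exp (-‖φ i - φ j‖ ^ 2 / (2 * σ ^ 2)) := by
  have hσ2 : (0:ℝ) < σ ^ 2 := by positivity
  set a : Fin n → ℝ := fun i => c i * Real.exp (-‖φ i‖ ^ 2 / (2 * σ ^ 2)) with ha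
  have key : ∀ i j, c i * c j * Real.exp (-‖φ i - φ j‖ ^ 2 / (2 * σ ^ 2))
      = a i * a j * Real.exp (inner ℝ (φ i) (φ j) / σ ^ 2) := by
    intro i j
    rw [ha]
    have hns : ‖φ i - φ j‖ ^ 2 = ‖φ i‖ ^ 2 - 2 * (inner ℝ (φ i) (φ j) : ℝ) + ‖φ j‖ ^ 2 :=
      norm_sub_sq_real _ _
    have : -‖φ i - φ j‖ ^ 2 / (2 * σ ^ 2)
        = -‖φ i‖ ^ 2 / (2 * σ ^ 2) + -‖φ j‖ ^ 2 / (2 * σ ^ 2)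
          + (inner ℝ (φ i) (φ j) : ℝ) / σ ^ 2 := by
      rw [hns]; field_simp; ring
    rw [this, Real.exp_add, Real.exp_add]
    ring
  simp_rw [key]
  -- expand exp as a power series
  have hsum : ∀ i j : Fin n, Summable
      (fun m : ℕ => a i * a j * (((inner ℝ (φ i) (φ j) : ℝ) / σ ^ 2) ^ m / (m.factorial : ℝ))) :=
    fun i j => (Real.summable_pow_div_factorial _).mul_left _
  have hterm : ∀ i j : Fin n, a i * a j * Real.exp (inner ℝ (φ i) (φ j) / σ ^ 2)
      = ∑' m : ℕ, a i * a j * (((inner ℝ (φ i) (φ j) : ℝ) / σ ^ 2) ^ m / (m.factorial : ℝ)) := by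
    intro i j
    rw [real_exp_eq_tsum, ← tsum_mul_left]
  simp_rw [hterm]
  have hswap : ∀ i : Fin n,
      ∑ j, ∑' m : ℕ, a i * a j * (((inner ℝ (φ i) (φ j) : ℝ) / σ ^ 2) ^ m / (m.factorial : ℝ))
      = ∑' m : ℕ, ∑ j, a i * a j * (((inner ℝ (φ i) (φ j) : ℝ) / σ ^ 2) ^ m / (m.factorial : ℝ)) := by
    intro i
    exact (Summable.tsum_finsetSum fun j _ => hsum i j).symm
  simp_rw [hswap]
  rw [← Summable.tsum_finsetSum (fun i _ => (hasSum_sum fun j _ => (hsum i j).hasSum).summable)]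
  refine tsum_nonneg fun m => ?_
  have hfac : ∀ i j : Fin n,
      a i * a j * (((inner ℝ (φ i) (φ j) : ℝ) / σ ^ 2) ^ m / (m.factorial : ℝ))
      = (a i * a j * (inner ℝ (φ i) (φ j) : ℝ) ^ m) * (1 / ((σ ^ 2) ^ m * (m.factorial : ℝ))) := by
    intro i j
    rw [div_pow]
    have hf : (0:ℝ) < (m.factorial : ℝ) := by positivity
    field_simp
  simp_rw [hfac, ← Finset.sum_mul]
  have h1 : (0:ℝ) ≤ 1 / ((σ ^ 2) ^ m * (m.factorial : ℝ)) := by positivity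
  exact mul_nonneg (inner_pow_quad_nonneg n φ a m) h1
end

section
/- Let H be a real inner product space and σ > 0. Define the normalization map φ ↦ φ̃ on H by φ̃ = φ/‖φ‖ if φ ≠ 0 and φ̃ = 0 otherwise. Then the kernel G on H given by G(φ, φ') = ‖φ‖ · ‖φ'‖ · exp(-‖φ̃ - φ̃'‖²/(2σ²)) is positive definite: for every n, every φ_1, …, φ_n ∈ H and every c_1, …, c_n ∈ ℝ, one has Σ_{i,j} c_i c_j ‖φ_i‖ ‖φ_j‖ exp(-‖φ̃_i - φ̃_j‖²/(2σ²)) ≥ 0. -/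
open Real Classical
open Finset

local notation "⟪" x ", " y "⟫" => @inner ℝ _ _ x y

/-- `(i,j) ↦ ⟪y i, y j⟫ ^ k` is positive definite. -/
lemma inner_pow_posdef_aux {H : Type*} [NormedAddCommGroup H] [InnerProductSpace ℝ H]
    (k n : ℕ) (y : Fin n → H) (e : Fin n → ℝ) :
    0 ≤ ∑ i, ∑ j, e i * e j * ⟪y i, y j⟫ ^ k := by
  set V := Submodule.span ℝ (Set.range y) with hV
  haveI : FiniteDimensional ℝ V := FiniteDimensional.span_of_finite ℝ (Set.finite_range y)
  set b := stdOrthonormalBasis ℝ V with hb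
  set N := Module.finrank ℝ V with hN
  have hy : ∀ i, y i ∈ V := fun i => Submodule.subset_span (Set.mem_range_self i)
  set y' : Fin n → V := fun i => ⟨y i, hy i⟩ with hy'
  set a : Fin n → Fin N → ℝ := fun i m => ⟪y' i, b m⟫ with ha
  have hinner : ∀ i j, ⟪y i, y j⟫ = ∑ m, a i m * a j m := by
    intro i j
    have hc : ⟪y i, y j⟫ = ⟪y' i, y' j⟫ := rfl
    rw [hc, ← b.sum_inner_mul_inner (y' i) (y' j)]
    refine Finset.sum_congr rfl fun m _ => ?_
    show ⟪y' i, b m⟫ * ⟪b m, y' j⟫ = ⟪y' i, b m⟫ * ⟪y' j, b m⟫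
    rw [real_inner_comm (y' j) (b m)]
  have key : ∀ i j : Fin n, e i * e j * ⟪y i, y j⟫ ^ k
      = ∑ μ : Fin k → Fin N, (e i * ∏ l, a i (μ l)) * (e j * ∏ l, a j (μ l)) := by
    intro i j
    rw [hinner]
    have : (∑ m, a i m * a j m) ^ k = ∑ μ : Fin k → Fin N, ∏ l, (a i (μ l) * a j (μ l)) := by
      rw [← Fin.prod_const k (∑ m, a i m * a j m), Finset.prod_univ_sum]
      rw [Fintype.piFinset_univ]
    rw [this, Finset.mul_sum]
    refine Finset.sum_congr rfl fun μ _ => ?_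
    rw [Finset.prod_mul_distrib]; ring
  calc (0:ℝ) ≤ ∑ μ : Fin k → Fin N, (∑ i, e i * ∏ l, a i (μ l)) ^ 2 := by positivity
  _ = ∑ i, ∑ j, e i * e j * ⟪y i, y j⟫ ^ k := by
      simp_rw [key, sq, Finset.sum_mul_sum]
      rw [Finset.sum_comm]
      exact Finset.sum_congr rfl fun i _ => Finset.sum_comm

lemma exp_inner_posdef {H : Type*} [NormedAddCommGroup H] [InnerProductSpace ℝ H]
    (n : ℕ) (y : Fin n → H) (e : Fin n → ℝ) :
    0 ≤ ∑ i, ∑ j, e i * e j * Real.exp ⟪y i, y j⟫ := by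
  have hexp : ∀ t : ℝ, Real.exp t = ∑' k : ℕ, t ^ k / (Nat.factorial k) := by
    intro t
    rw [Real.exp_eq_exp_ℝ, NormedSpace.exp_eq_tsum_div]
  have hsum : ∀ i j : Fin n, Summable (fun k : ℕ => e i * e j * (⟪y i, y j⟫ ^ k / (Nat.factorial k))) :=
    fun i j => Summable.mul_left (e i * e j) (Real.summable_pow_div_factorial ⟪y i, y j⟫)
  have : ∑ i, ∑ j, e i * e j * Real.exp ⟪y i, y j⟫
      = ∑' k : ℕ, ∑ i, ∑ j, e i * e j * (⟪y i, y j⟫ ^ k / (Nat.factorial k)) := by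
    rw [Summable.tsum_finsetSum (fun i _ => summable_sum (fun j _ => hsum i j))]
    refine Finset.sum_congr rfl fun i _ => ?_
    rw [Summable.tsum_finsetSum (fun j _ => hsum i j)]
    refine Finset.sum_congr rfl fun j _ => ?_
    rw [hexp, ← tsum_mul_left]
  rw [this]
  refine tsum_nonneg fun k => ?_
  have h1 : ∑ i, ∑ j, e i * e j * (⟪y i, y j⟫ ^ k / (Nat.factorial k))
      = (∑ i, ∑ j, e i * e j * ⟪y i, y j⟫ ^ k) / (Nat.factorial k) := by
    rw [Finset.sum_div]
    refine Finset.sum_congr rfl fun i _ => ?_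
    rw [Finset.sum_div]
    refine Finset.sum_congr rfl fun j _ => ?_
    ring
  rw [h1]
  exact div_nonneg (inner_pow_posdef_aux k n y e) (by positivity)

/-- Normalization map: `φ̃ = φ/‖φ‖` if `φ ≠ 0`, and `0` otherwise. -/
noncomputable def normalize' {H : Type*} [NormedAddCommGroup H] [InnerProductSpace ℝ H]
    (v : H) : H :=
  if v = 0 then 0 else ‖v‖⁻¹ • v

/-- The kernel `G(φ, φ') = ‖φ‖ ‖φ'‖ exp(-‖φ̃ - φ̃'‖²/(2σ²))` is positive definite on a
real inner product space `H`. -/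
theorem weighted_normalized_gaussian_kernel_pos_def
    {H : Type*} [NormedAddCommGroup H] [InnerProductSpace ℝ H]
    (σ : ℝ) (hσ : 0 < σ)
    (n : ℕ) (φ : Fin n → H) (c : Fin n → ℝ) :
    0 ≤ ∑ i, ∑ j,
        c i * c j * (‖φ i‖ * ‖φ j‖ *
          Real.exp (-‖normalize' (φ i) - normalize' (φ j)‖ ^ 2 / (2 * σ ^ 2))) := by
  set u : Fin n → H := fun i => normalize' (φ i) with hu
  set y : Fin n → H := fun i => σ⁻¹ • u i with hy
  set e : Fin n → ℝ := fun i => c i * ‖φ i‖ * Real.exp (-‖u i‖ ^ 2 / (2 * σ ^ 2)) with he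
  have hσ2 : σ ^ 2 ≠ 0 := by positivity
  have heq : ∀ i j, c i * c j * (‖φ i‖ * ‖φ j‖ *
      Real.exp (-‖u i - u j‖ ^ 2 / (2 * σ ^ 2))) = e i * e j * Real.exp ⟪y i, y j⟫ := by
    intro i j
    have hin : ⟪y i, y j⟫ = ⟪u i, u j⟫ / σ ^ 2 := by
      simp only [hy, real_inner_smul_left, real_inner_smul_right]
      rw [eq_div_iff hσ2]
      ring_nf
      rw [← mul_pow, mul_inv_cancel₀ (ne_of_gt hσ), one_pow, one_mul]
    have hnorm : -‖u i - u j‖ ^ 2 / (2 * σ ^ 2)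
        = -‖u i‖ ^ 2 / (2 * σ ^ 2) + ⟪u i, u j⟫ / σ ^ 2 + -‖u j‖ ^ 2 / (2 * σ ^ 2) := by
      rw [@norm_sub_sq_real]
      field_simp
      ring
    rw [hin, hnorm, Real.exp_add, Real.exp_add, he]
    ring
  calc (0:ℝ) ≤ ∑ i, ∑ j, e i * e j * Real.exp ⟪y i, y j⟫ := exp_inner_posdef n y e
  _ = _ := by
      refine Finset.sum_congr rfl fun i _ => Finset.sum_congr rfl fun j _ => ?_
      rw [heq]
end

section
/- Let d ≥ 1 be an integer, let Ω be a finite subset of ℝ^d, let H be a real inner product space, and let β > 0 and σ > 0. Define the normalization map φ ↦ φ̃ pointwise by φ̃(z) = φ(z)/‖φ(z)‖ if φ(z) ≠ 0 and φ̃(z) = 0 otherwise. Define, for functions φ, φ' : Ω → H, the single-layer convolutional kernel K(φ, φ') = Σ_{z ∈ Ω} Σ_{z' ∈ Ω} ‖φ(z)‖ · ‖φ'(z')‖ · exp(-‖z - z'‖²/(2β²)) · exp(-‖φ̃(z) - φ̃'(z')‖²/(2σ²)), where ‖z - z'‖ is the Euclidean norm on ℝ^d and the other norms are induced by the inner product on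 H. Then K is positive definite on the set of functions Ω → H: for every n, every φ_1, …, φ_n : Ω → H and every c_1, …, c_n ∈ ℝ, one has Σ_{i,j} c_i c_j K(φ_i, φ_j) ≥ 0. -/
open Real Classical

section Aux

variable {I : Type*} [Fintype I]

/-- Quadratic form nonnegativity characterization over ℝ. -/
lemma psd_of_qf {A : Matrix I I ℝ} (hsym : ∀ p q, A p q = A q p)
    (h : ∀ x : I → ℝ, 0 ≤ ∑ p, ∑ q, x p * x q * A p q) : A.PosSemidef := by
  refine Matrix.PosSemidef.of_dotProduct_mulVec_nonneg ?_ fun x => ?_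
  · ext p q
    simp [Matrix.conjTranspose, hsym q p]
  · have := h x
    calc (0:ℝ) ≤ ∑ p, ∑ q, x p * x q * A p q := this
    _ = dotProduct (star x) (A.mulVec x) := by
        simp only [dotProduct, Matrix.mulVec, Pi.star_apply, star_trivial,
          Finset.mul_sum]
        refine Finset.sum_congr rfl fun p _ => Finset.sum_congr rfl fun q _ => by ring

lemma qf_of_psd {A : Matrix I I ℝ} (h : A.PosSemidef) (x : I → ℝ) :
    0 ≤ ∑ p, ∑ q, x p * x q * A p q := by
  have := h.dotProduct_mulVec_nonneg x
  calc (0:ℝ) ≤ dotProduct (star x) (A.mulVec x) := this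
  _ = ∑ p, ∑ q, x p * x q * A p q := by
      simp only [dotProduct, Matrix.mulVec, Pi.star_apply, star_trivial,
        Finset.mul_sum]
      refine Finset.sum_congr rfl fun p _ => Finset.sum_congr rfl fun q _ => by ring

lemma psd_symm {A : Matrix I I ℝ} (h : A.PosSemidef) (p q : I) : A p q = A q p := by
  have := congrFun (congrFun h.1 q) p
  simpa [Matrix.conjTranspose_apply] using this

/-- Schur product theorem over ℝ. -/
lemma schur_psd {A B : Matrix I I ℝ} (hA : A.PosSemidef) (hB : B.PosSemidef) :
    (Matrix.of fun p q => A p q * B p q).PosSemidef := by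
  classical
  obtain ⟨C, hC⟩ : ∃ C : Matrix I I ℝ, B = Matrix.conjTranspose C * C := by
    open scoped MatrixOrder in exact CStarAlgebra.nonneg_iff_eq_star_mul_self.mp hB.nonneg
  refine psd_of_qf (fun p q => ?_) (fun x => ?_)
  · simp only [Matrix.of_apply]
    rw [psd_symm hA p q, psd_symm hB p q]
  · have hBentry : ∀ p q, B p q = ∑ r, C r p * C r q := by
      intro p q
      rw [hC]
      simp [Matrix.mul_apply, Matrix.conjTranspose_apply]
    calc (0:ℝ) ≤ ∑ r, ∑ p, ∑ q, (x p * C r p) * (x q * C r q) * A p q :=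
          Finset.sum_nonneg fun r _ => qf_of_psd hA _
    _ = ∑ p, ∑ q, x p * x q * (Matrix.of fun p q => A p q * B p q) p q := by
        rw [Finset.sum_comm]
        refine Finset.sum_congr rfl fun p _ => ?_
        rw [Finset.sum_comm]
        refine Finset.sum_congr rfl fun q _ => ?_
        simp only [Matrix.of_apply, hBentry p q, Finset.mul_sum, Finset.sum_mul]
        refine Finset.sum_congr rfl fun r _ => by ring

/-- Gram matrices are positive semidefinite. -/
lemma gram_psd {E : Type*} [NormedAddCommGroup E] [InnerProductSpace ℝ E] (v : I → E) :
    (Matrix.of fun p q => (inner ℝ (v p) (v q) : ℝ)).PosSemidef := by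
  refine psd_of_qf (fun p q => real_inner_comm _ _) (fun x => ?_)
  have : ∑ p, ∑ q, x p * x q * (Matrix.of fun p q => (inner ℝ (v p) (v q) : ℝ)) p q
      = (inner ℝ (∑ p, x p • v p) (∑ q, x q • v q) : ℝ) := by
    rw [sum_inner]
    refine Finset.sum_congr rfl fun p _ => ?_
    rw [inner_sum]
    refine Finset.sum_congr rfl fun q _ => ?_
    simp [real_inner_smul_left, real_inner_smul_right]
    ring
  rw [this]
  exact real_inner_self_nonneg

/-- Entrywise powers of PSD matrices are PSD. -/
lemma pow_psd {A : Matrix I I ℝ} (hA : A.PosSemidef) (k : ℕ) :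
    (Matrix.of fun p q => A p q ^ k).PosSemidef := by
  induction k with
  | zero =>
      simp only [pow_zero]
      have := gram_psd (E := ℝ) (fun _ : I => (1 : ℝ))
      simpa using this
  | succ k ih =>
      have := schur_psd hA ih
      refine psd_of_qf (fun p q => by simp only [Matrix.of_apply]; rw [psd_symm hA p q]) ?_
      intro x
      have h := qf_of_psd this x
      calc (0:ℝ) ≤ _ := h
      _ = _ := by
        refine Finset.sum_congr rfl fun p _ => Finset.sum_congr rfl fun q _ => ?_
        simp only [Matrix.of_apply]
        rw [pow_succ]
        ring

/-- exp of a scaled inner-product Gram matrix is PSD. -/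
lemma exp_inner_psd {E : Type*} [NormedAddCommGroup E] [InnerProductSpace ℝ E]
    {s : ℝ} (hs : 0 ≤ s) (v : I → E) :
    (Matrix.of fun p q => Real.exp (s * (inner ℝ (v p) (v q) : ℝ))).PosSemidef := by
  refine psd_of_qf (fun p q => by simp only [Matrix.of_apply]; rw [real_inner_comm]) (fun x => ?_)
  have hexp : ∀ y : ℝ, Real.exp y = ∑' k : ℕ, y ^ k / (Nat.factorial k) := by
    intro y
    rw [Real.exp_eq_exp_ℝ, NormedSpace.exp_eq_tsum_div]
  have hsummable : ∀ p q : I, Summable (fun k : ℕ =>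
      x p * x q * ((s * (inner ℝ (v p) (v q) : ℝ)) ^ k / (Nat.factorial k))) := by
    intro p q
    exact Summable.mul_left _ (Real.summable_pow_div_factorial _)
  calc (0:ℝ) ≤ ∑' k : ℕ, ∑ p, ∑ q,
        x p * x q * ((s * (inner ℝ (v p) (v q) : ℝ)) ^ k / (Nat.factorial k)) := by
        refine tsum_nonneg fun k => ?_
        have : ∀ p q : I, x p * x q * ((s * (inner ℝ (v p) (v q) : ℝ)) ^ k / (Nat.factorial k))
            = (s ^ k / (Nat.factorial k)) *
              (x p * x q * (Matrix.of fun p q => ((inner ℝ (v p) (v q) : ℝ)) ^ k) p q) := by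
          intro p q
          simp only [Matrix.of_apply, mul_pow]
          ring
        simp only [this, ← Finset.mul_sum]
        exact mul_nonneg (div_nonneg (pow_nonneg hs _) (Nat.cast_nonneg _))
          (qf_of_psd (pow_psd (gram_psd v) k) x)
  _ = ∑ p, ∑ q, x p * x q * (Matrix.of fun p q =>
        Real.exp (s * (inner ℝ (v p) (v q) : ℝ))) p q := by
      rw [Summable.tsum_finsetSum (fun p _ => summable_sum fun q _ => hsummable p q)]
      refine Finset.sum_congr rfl fun p _ => ?_
      rw [Summable.tsum_finsetSum (fun q _ => hsummable p q)]
      refine Finset.sum_congr rfl fun q _ => ?_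
      rw [Matrix.of_apply, hexp, ← tsum_mul_left]

/-- The Gaussian kernel matrix is PSD. -/
lemma gauss_psd {E : Type*} [NormedAddCommGroup E] [InnerProductSpace ℝ E]
    {t : ℝ} (ht : 0 < t) (v : I → E) :
    (Matrix.of fun p q => Real.exp (-‖v p - v q‖ ^ 2 / (2 * t ^ 2))).PosSemidef := by
  have hs : (0:ℝ) ≤ 1 / t ^ 2 := by positivity
  refine psd_of_qf (fun p q => by simp only [Matrix.of_apply]; rw [norm_sub_rev]) (fun x => ?_)
  set y : I → ℝ := fun p => x p * Real.exp (-‖v p‖ ^ 2 / (2 * t ^ 2)) with hy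
  have ht' : t ≠ 0 := ne_of_gt ht
  have h := qf_of_psd (exp_inner_psd hs v) y
  calc (0:ℝ) ≤ _ := h
  _ = ∑ p, ∑ q, x p * x q * (Matrix.of fun p q =>
        Real.exp (-‖v p - v q‖ ^ 2 / (2 * t ^ 2))) p q := by
      refine Finset.sum_congr rfl fun p _ => Finset.sum_congr rfl fun q _ => ?_
      simp only [hy, Matrix.of_apply]
      rw [mul_mul_mul_comm, mul_assoc, ← Real.exp_add, ← Real.exp_add]
      congr 2
      rw [norm_sub_sq_real]
      field_simp
      ring

end Aux

/-- The one-layer convolutional kernel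
`K(φ, φ') = Σ_{z,z' ∈ Ω} ‖φ(z)‖ ‖φ'(z')‖ exp(-‖z-z'‖²/(2β²)) exp(-‖φ̃(z)-φ̃'(z')‖²/(2σ²))`
is positive definite on image feature maps `Ω → H`, where `Ω` is a finite subset of `ℝ^d`. -/
theorem convolutional_kernel_single_layer_pos_def
    (d : ℕ) (hd : 1 ≤ d) (Ω : Finset (EuclideanSpace ℝ (Fin d)))
    {H : Type*} [NormedAddCommGroup H] [InnerProductSpace ℝ H]
    (β σ : ℝ) (hβ : 0 < β) (hσ : 0 < σ)
    (n : ℕ) (φ : Fin n → (Ω → H)) (c : Fin n → ℝ) :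
    0 ≤ ∑ i, ∑ j, c i * c j *
        (∑ z : Ω, ∑ z' : Ω,
          ‖φ i z‖ * ‖φ j z'‖ *
            Real.exp (-‖(z : EuclideanSpace ℝ (Fin d)) - (z' : EuclideanSpace ℝ (Fin d))‖ ^ 2
              / (2 * β ^ 2)) *
            Real.exp (-‖normalize' (φ i z) - normalize' (φ j z')‖ ^ 2 / (2 * σ ^ 2))) := by
  classical
  let u : Fin n × Ω → EuclideanSpace ℝ (Fin d) := fun p => (p.2 : EuclideanSpace ℝ (Fin d))
  let w : Fin n × Ω → H := fun p => normalize' (φ p.1 p.2)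
  let x : Fin n × Ω → ℝ := fun p => c p.1 * ‖φ p.1 p.2‖
  have h := qf_of_psd (schur_psd (gauss_psd hβ u) (gauss_psd hσ w)) x
  calc (0:ℝ) ≤ ∑ p, ∑ q, x p * x q *
      (Matrix.of fun p q =>
        (Matrix.of fun p q => Real.exp (-‖u p - u q‖ ^ 2 / (2 * β ^ 2))) p q *
        (Matrix.of fun p q => Real.exp (-‖w p - w q‖ ^ 2 / (2 * σ ^ 2))) p q) p q := h
  _ = _ := by
    simp only [Matrix.of_apply]
    simp only [Fintype.sum_prod_type]
    refine Finset.sum_congr rfl fun i _ => ?_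
    rw [Finset.sum_comm]
    refine Finset.sum_congr rfl fun j _ => ?_
    rw [Finset.mul_sum]
    refine Finset.sum_congr rfl fun z _ => ?_
    rw [Finset.mul_sum]
    refine Finset.sum_congr rfl fun z' _ => ?_
    simp only [u, w, x]
    ring
end
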